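/- arXiv:2308.04993 — 2 statements merged into one kernel-verified Lean document; each statement's English description precedes it below -/
import Mathlib

section
/- For every integer k ≥ 1 and every τ in the upper half-plane satisfying the stated nonvanishing assumption, the series defining the twisted Weierstrass function P_k[θ,φ](z,τ) converges absolutely for every z ∈ ℂ with |q_τ| < |q_z| < 1, the convergence is uniform on every compact subset of {z ∈ ℂ : |q_τ| < |q_z| < 1}, and consequently z ↦ P_k[θ,φ](z,τ) is holomorphic on that region. -/
open Complex Filter

/-- `qpow w n = e^{2πi n w}`, i.e. `q_w^n` for a real exponent `n`. -/
noncomputable def qpow (w : ℂ) (n : ℝ) : ℂ := Complex.exp (2 * Real.pi * Complex.I * n * w)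

/-- `qq w = e^{2πi w} = q_w`. -/
noncomputable def qq (w : ℂ) : ℂ := Complex.exp (2 * Real.pi * Complex.I * w)

/-- The region `|q_τ| < |q_z| < 1`. -/
def Reg (τ z : ℂ) : Prop := ‖qq τ‖ < ‖qq z‖ ∧ ‖qq z‖ < 1

/-- The `n = λ + m` term of the series defining the twisted Weierstrass function
`P_k[θ,φ](z,τ)`, where the term is omitted when `(θ,φ) = (1,1)` (i.e. `λ = 0` and
`θ = 1`) and `n = 0`. -/
noncomputable def Pterm (k : ℕ) (lam : ℝ) (θ : ℂ) (τ z : ℂ) (m : ℤ) : ℂ :=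
  if lam = 0 ∧ θ = 1 ∧ m = 0 then 0
  else ((lam + (m : ℝ) : ℝ) : ℂ) ^ (k - 1) * qpow z (lam + (m : ℝ)) /
    (1 - θ⁻¹ * qpow τ (lam + (m : ℝ)))

/-- The twisted Weierstrass function
`P_k[θ,φ](z,τ) = ((−2πi)^k/(k−1)!) Σ'_{n ∈ λ+ℤ} n^{k−1} q_z^n/(1 − θ⁻¹ q_τ^n)`. -/
noncomputable def twP (k : ℕ) (lam : ℝ) (θ : ℂ) (τ z : ℂ) : ℂ :=
  ((-(2 * Real.pi * Complex.I)) ^ k / (Nat.factorial (k - 1) : ℂ)) *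
    ∑' m : ℤ, Pterm k lam θ τ z m

lemma norm_qq (w : ℂ) : ‖qq w‖ = Real.exp (-(2 * Real.pi * w.im)) := by
  rw [qq, Complex.norm_exp]
  congr 1
  simp [Complex.mul_re]

lemma qq_pos (w : ℂ) : 0 < ‖qq w‖ := by rw [norm_qq]; exact Real.exp_pos _

lemma norm_qpow (w : ℂ) (n : ℝ) : ‖qpow w n‖ = ‖qq w‖ ^ n := by
  rw [norm_qq, ← Real.exp_log (Real.exp_pos (-(2 * Real.pi * w.im))), Real.log_exp,
    ← Real.exp_mul, qpow, Complex.norm_exp]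
  congr 1
  simp [Complex.mul_re]
  ring

lemma norm_Pterm (k : ℕ) (lam : ℝ) (θ : ℂ) (τ z : ℂ) (m : ℤ)
    (h : ¬(lam = 0 ∧ θ = 1 ∧ m = 0)) :
    ‖Pterm k lam θ τ z m‖ =
      |lam + (m : ℝ)| ^ (k - 1) * ‖qq z‖ ^ (lam + (m : ℝ)) /
        ‖1 - θ⁻¹ * qpow τ (lam + (m : ℝ))‖ := by
  rw [Pterm, if_neg h, norm_div, norm_mul, norm_pow, ← norm_qpow]
  simp [Complex.norm_real]
  norm_cast


lemma poly_geom (d : ℕ) {ρ : ℝ} (h0 : 0 < ρ) (h1 : ρ < 1) :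
    Summable (fun n : ℕ => ((n : ℝ) + 1) ^ d * ρ ^ n) := by
  have h : Summable (fun n : ℕ => (n : ℝ) ^ d * ρ ^ n) :=
    summable_pow_mul_geometric_of_norm_lt_one d (by rwa [Real.norm_eq_abs, abs_of_pos h0])
  have h2 : Summable (fun n : ℕ => ((n : ℝ) + 1) ^ d * ρ ^ (n + 1)) := by
    have := (summable_nat_add_iff 1).2 h
    simpa using this
  have := h2.mul_left ρ⁻¹
  refine this.congr fun n => ?_
  field_simp
  ring

lemma majorant (k : ℕ) (lam : ℝ) (hlam : lam ∈ Set.Ico (0:ℝ) 1) (θ : ℂ) (hθ : θ ≠ 0)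
    (τ : ℂ)
    (hden : ∀ m : ℤ, ¬(lam = 0 ∧ θ = 1 ∧ m = 0) →
      1 - θ⁻¹ * qpow τ (lam + (m : ℝ)) ≠ 0)
    (r0 r1 : ℝ) (h0 : ‖qq τ‖ < r0) (h1 : r1 < 1) (hr01 : r0 ≤ r1) :
    ∃ u : ℤ → ℝ, Summable u ∧
      ∀ z : ℂ, r0 ≤ ‖qq z‖ → ‖qq z‖ ≤ r1 → ∀ m : ℤ, ‖Pterm k lam θ τ z m‖ ≤ u m := by
  obtain ⟨hlam0, hlam1⟩ := hlam
  set q : ℝ := ‖qq τ‖ with hq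
  have hq0 : 0 < q := qq_pos τ
  have hr0pos : 0 < r0 := hq0.trans h0
  have hr1pos : 0 < r1 := hr0pos.trans_le hr01
  have hq1 : q < 1 := h0.trans_le (hr01.trans h1.le)
  set u : ℤ → ℝ := fun m =>
    if lam = 0 ∧ θ = 1 ∧ m = 0 then 0 else
      |lam + (m : ℝ)| ^ (k - 1) *
        (if (0:ℝ) ≤ lam + (m : ℝ) then r1 ^ (lam + (m : ℝ)) else r0 ^ (lam + (m : ℝ))) /
        ‖1 - θ⁻¹ * qpow τ (lam + (m : ℝ))‖ with hu
  have hu_nonneg : ∀ m : ℤ, 0 ≤ u m := by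
    intro m
    rw [hu]
    dsimp only
    split_ifs with h h'
    · exact le_refl 0
    · exact div_nonneg (mul_nonneg (pow_nonneg (abs_nonneg _) _)
        (Real.rpow_nonneg hr1pos.le _)) (norm_nonneg _)
    · exact div_nonneg (mul_nonneg (pow_nonneg (abs_nonneg _) _)
        (Real.rpow_nonneg hr0pos.le _)) (norm_nonneg _)
  refine ⟨u, ?_, ?_⟩
  · -- Summability
    apply Summable.of_nat_of_neg
    · -- positive side
      have htend : Tendsto (fun n : ℕ => ‖θ⁻¹‖ * q ^ (lam + (n : ℝ))) atTop (nhds 0) := by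
        have h2 : Tendsto (fun n : ℕ => (‖θ⁻¹‖ * q ^ lam) * q ^ n) atTop (nhds 0) := by
          simpa using (tendsto_pow_atTop_nhds_zero_of_lt_one hq0.le hq1).const_mul
            (‖θ⁻¹‖ * q ^ lam)
        refine h2.congr fun n => ?_
        rw [Real.rpow_add hq0, Real.rpow_natCast]
        ring
      have hev : ∀ᶠ n : ℕ in atTop, ‖θ⁻¹ * qpow τ (lam + (n : ℝ))‖ ≤ 1/2 := by
        have := htend.eventually_le_const (by norm_num : (0:ℝ) < 1/2)
        filter_upwards [this] with n hn
        rw [norm_mul, norm_qpow]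
        exact hn
      have hbound : ∀ᶠ n : ℕ in atTop, ‖u (n : ℤ)‖ ≤
          2 * ‖((n : ℝ) + 1) ^ (k - 1) * r1 ^ n‖ := by
        filter_upwards [hev] with n hn
        have hcast : (((n : ℤ) : ℝ)) = (n : ℝ) := by push_cast; ring
        have hg0 : (0:ℝ) ≤ ((n : ℝ) + 1) ^ (k - 1) * r1 ^ n := by positivity
        rw [Real.norm_eq_abs, _root_.abs_of_nonneg (hu_nonneg _), Real.norm_eq_abs,
          _root_.abs_of_nonneg hg0, hu]
        dsimp only
        rw [hcast]
        have hn0 : (0:ℝ) ≤ lam + (n : ℝ) := by positivity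
        split_ifs with h
        · positivity
        · -- main estimate
          have hd : (1:ℝ)/2 ≤ ‖1 - θ⁻¹ * qpow τ (lam + (n : ℝ))‖ := by
            have h3 := norm_sub_norm_le (1 : ℂ) (θ⁻¹ * qpow τ (lam + (n : ℝ)))
            rw [norm_one] at h3
            linarith
          have hnum : |lam + (n : ℝ)| ^ (k - 1) * r1 ^ (lam + (n : ℝ)) ≤
              ((n : ℝ) + 1) ^ (k - 1) * r1 ^ n := by
            have h4 : |lam + (n : ℝ)| ≤ (n : ℝ) + 1 := by
              rw [_root_.abs_of_nonneg hn0]; linarith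
            have h5 : r1 ^ (lam + (n : ℝ)) ≤ r1 ^ (n : ℕ) := by
              rw [Real.rpow_add hr1pos, ← Real.rpow_natCast r1 n]
              have : r1 ^ lam ≤ 1 := Real.rpow_le_one hr1pos.le h1.le hlam0
              calc r1 ^ lam * r1 ^ ((n : ℕ) : ℝ) ≤ 1 * r1 ^ ((n : ℕ) : ℝ) :=
                    mul_le_mul_of_nonneg_right this (Real.rpow_nonneg hr1pos.le _)
                _ = r1 ^ ((n : ℕ) : ℝ) := one_mul _
            exact mul_le_mul (pow_le_pow_left₀ (abs_nonneg _) h4 _) h5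
              (Real.rpow_nonneg hr1pos.le _) (by positivity)
          calc |lam + (n : ℝ)| ^ (k - 1) * r1 ^ (lam + (n : ℝ)) /
                ‖1 - θ⁻¹ * qpow τ (lam + (n : ℝ))‖
              ≤ |lam + (n : ℝ)| ^ (k - 1) * r1 ^ (lam + (n : ℝ)) / (1/2) :=
                div_le_div_of_nonneg_left (by positivity) (by norm_num) hd
            _ = 2 * (|lam + (n : ℝ)| ^ (k - 1) * r1 ^ (lam + (n : ℝ))) := by ring
            _ ≤ 2 * (((n : ℝ) + 1) ^ (k - 1) * r1 ^ n) := by linarith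
      exact summable_of_isBigO_nat (poly_geom (k-1) hr1pos h1)
        (Asymptotics.IsBigO.of_bound 2 hbound)
    · -- negative side
      have hρ0 : 0 < q / r0 := div_pos hq0 hr0pos
      have hρ1 : q / r0 < 1 := (div_lt_one hr0pos).2 h0
      have hR1 : 1 < r0 / q := (one_lt_div hq0).2 h0
      have htend : Tendsto (fun j : ℕ => ‖θ⁻¹‖ * q ^ (lam - (j : ℝ))) atTop atTop := by
        have h2 : Tendsto (fun j : ℕ => (q⁻¹) ^ j) atTop atTop :=
          tendsto_pow_atTop_atTop_of_one_lt ((one_lt_inv₀ hq0).2 hq1)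
        have h3 : Tendsto (fun j : ℕ => (‖θ⁻¹‖ * q ^ lam) * (q⁻¹) ^ j) atTop atTop := by
          apply h2.const_mul_atTop
          have : ‖θ⁻¹‖ > 0 := by simpa using hθ
          positivity
        refine h3.congr fun j => ?_
        rw [Real.rpow_sub hq0, Real.rpow_natCast, div_eq_mul_inv, ← inv_pow]
        ring
      have hev : ∀ᶠ j : ℕ in atTop, 2 ≤ ‖θ⁻¹‖ * q ^ (lam - (j : ℝ)) :=
        htend.eventually_ge_atTop 2
      have hbound : ∀ᶠ j : ℕ in atTop, ‖u (-(j : ℤ))‖ ≤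
          (2 * ‖θ‖ * (r0/q)) * ‖((j : ℝ) + 1) ^ (k - 1) * (q/r0) ^ j‖ := by
        filter_upwards [hev, eventually_ge_atTop 1] with j hj hj1
        have hcast : ((-(j : ℤ) : ℤ) : ℝ) = -(j : ℝ) := by push_cast; ring
        have hg0 : (0:ℝ) ≤ ((j : ℝ) + 1) ^ (k - 1) * (q/r0) ^ j := by positivity
        have hjn : (1:ℝ) ≤ (j:ℝ) := by exact_mod_cast hj1
        have hneg : lam + (-(j : ℝ)) < 0 := by linarith
        rw [Real.norm_eq_abs, _root_.abs_of_nonneg (hu_nonneg _), Real.norm_eq_abs,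
          _root_.abs_of_nonneg hg0, hu]
        dsimp only
        have hcond : ¬(lam = 0 ∧ θ = 1 ∧ (-(j:ℤ)) = 0) := by
          rintro ⟨-, -, hj0⟩
          omega
        rw [hcast, if_neg hcond, if_neg (not_le.2 hneg)]
        have hx : ‖θ⁻¹ * qpow τ (lam + (-(j : ℝ)))‖ = ‖θ⁻¹‖ * q ^ (lam - (j:ℝ)) := by
            rw [norm_mul, norm_qpow, show lam + (-(j:ℝ)) = lam - (j:ℝ) from by ring]
        have hd : ((1:ℝ)/2) * (‖θ⁻¹‖ * q ^ (lam - (j:ℝ))) ≤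
            ‖1 - θ⁻¹ * qpow τ (lam + (-(j : ℝ)))‖ := by
          have h3 := norm_sub_norm_le (θ⁻¹ * qpow τ (lam + (-(j : ℝ)))) (1 : ℂ)
          rw [norm_one, ← norm_sub_rev] at h3
          rw [hx] at *
          linarith
        have hdpos : (0:ℝ) < ((1:ℝ)/2) * (‖θ⁻¹‖ * q ^ (lam - (j:ℝ))) := by
          have : (0:ℝ) < ‖θ⁻¹‖ := by simpa using hθ
          positivity
        calc |lam + (-(j : ℝ))| ^ (k - 1) * r0 ^ (lam + (-(j : ℝ))) /
              ‖1 - θ⁻¹ * qpow τ (lam + (-(j : ℝ)))‖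
            ≤ |lam + (-(j : ℝ))| ^ (k - 1) * r0 ^ (lam + (-(j : ℝ))) /
              (((1:ℝ)/2) * (‖θ⁻¹‖ * q ^ (lam - (j:ℝ)))) :=
              div_le_div_of_nonneg_left (by positivity) hdpos hd
          _ = 2 * ‖θ‖ * (|lam - (j : ℝ)| ^ (k - 1) * (r0 ^ (lam - (j:ℝ)) / q ^ (lam - (j:ℝ)))) := by
              rw [norm_inv]
              have hθn : (0:ℝ) < ‖θ‖ := by simpa using hθ
              have : lam + (-(j:ℝ)) = lam - (j:ℝ) := by ring
              rw [this]
              field_simp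
          _ = 2 * ‖θ‖ * (|lam - (j : ℝ)| ^ (k - 1) * (r0/q) ^ (lam - (j:ℝ))) := by
              rw [Real.div_rpow hr0pos.le hq0.le]
          _ ≤ 2 * ‖θ‖ * (((j:ℝ) + 1) ^ (k - 1) * (r0/q) ^ ((1:ℝ) - (j:ℝ))) := by
              have hθn : (0:ℝ) ≤ ‖θ‖ := norm_nonneg _
              have h4 : |lam - (j : ℝ)| ≤ (j : ℝ) + 1 := by
                rw [_root_.abs_of_nonpos (by linarith)]; linarith
              have h5 : (r0/q) ^ (lam - (j:ℝ)) ≤ (r0/q) ^ ((1:ℝ) - (j:ℝ)) :=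
                Real.rpow_le_rpow_of_exponent_le hR1.le (by linarith)
              have h4' : |lam - (j : ℝ)| ^ (k - 1) ≤ ((j:ℝ) + 1) ^ (k - 1) :=
                pow_le_pow_left₀ (abs_nonneg _) h4 (k - 1)
              have h6 : |lam - (j : ℝ)| ^ (k - 1) * (r0/q) ^ (lam - (j:ℝ)) ≤
                  ((j:ℝ) + 1) ^ (k - 1) * (r0/q) ^ ((1:ℝ) - (j:ℝ)) :=
                mul_le_mul h4' h5 (Real.rpow_nonneg (by positivity) _) (by positivity)
              exact mul_le_mul_of_nonneg_left h6 (by positivity)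
          _ = (2 * ‖θ‖ * (r0/q)) * (((j:ℝ) + 1) ^ (k - 1) * (q/r0) ^ j) := by
              rw [show (1:ℝ) - (j:ℝ) = 1 + (-(j:ℝ)) by ring,
                Real.rpow_add (by positivity), Real.rpow_one,
                show (-(j:ℝ)) = -((j:ℕ):ℝ) by norm_num,
                Real.rpow_neg (by positivity), Real.rpow_natCast, ← inv_pow, inv_div]
              ring
      exact summable_of_isBigO_nat (poly_geom (k-1) hρ0 hρ1)
        (Asymptotics.IsBigO.of_bound _ hbound)
  · -- the bound
    intro z hz0 hz1 m
    by_cases h : lam = 0 ∧ θ = 1 ∧ m = 0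
    · rw [Pterm, if_pos h, hu]
      simp [h]
    · rw [norm_Pterm k lam θ τ z m h, hu]
      dsimp only
      rw [if_neg h]
      have hdpos : (0:ℝ) < ‖1 - θ⁻¹ * qpow τ (lam + (m : ℝ))‖ :=
        norm_pos_iff.2 (hden m h)
      gcongr
      case _ =>
        split_ifs with h'
        · exact Real.rpow_le_rpow (le_of_lt (qq_pos z)) hz1 h'
        · exact Real.rpow_le_rpow_of_nonpos hr0pos hz0 (le_of_not_ge h')

/-- For every integer `k ≥ 1`, `λ ∈ [0,1)`, `θ ≠ 0`, and `τ` in the upper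
half-plane such that all denominators `1 − θ⁻¹ q_τ^n` (for terms actually occurring in the
series) are nonzero: the series defining `P_k[θ,φ](z,τ)` converges absolutely for every `z`
with `|q_τ| < |q_z| < 1`, the convergence is uniform on every compact subset of this region,
and consequently `z ↦ P_k[θ,φ](z,τ)` is holomorphic on that region. -/
theorem twistedWeierstrass_convergence
    (k : ℕ) (hk : 1 ≤ k) (lam : ℝ) (hlam : lam ∈ Set.Ico (0:ℝ) 1)
    (θ : ℂ) (hθ : θ ≠ 0) (τ : ℂ) (hτ : 0 < τ.im)
    (hden : ∀ m : ℤ, ¬(lam = 0 ∧ θ = 1 ∧ m = 0) →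
      1 - θ⁻¹ * qpow τ (lam + (m : ℝ)) ≠ 0) :
    (∀ z : ℂ, Reg τ z → Summable (fun m : ℤ => ‖Pterm k lam θ τ z m‖)) ∧
    (∀ K : Set ℂ, K ⊆ {z : ℂ | Reg τ z} → IsCompact K →
      TendstoUniformlyOn (fun (s : Finset ℤ) (z : ℂ) => ∑ m ∈ s, Pterm k lam θ τ z m)
        (fun z : ℂ => ∑' m : ℤ, Pterm k lam θ τ z m) atTop K) ∧
    DifferentiableOn ℂ (fun z : ℂ => twP k lam θ τ z) {z : ℂ | Reg τ z} := by
  have hregopen : IsOpen {z : ℂ | Reg τ z} := by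
    have hqqc : Continuous qq := by
      unfold qq
      exact Complex.continuous_exp.comp (continuous_const.mul continuous_id)
    have hc : Continuous fun z : ℂ => ‖qq z‖ := hqqc.norm
    have : {z : ℂ | Reg τ z} = (fun z : ℂ => ‖qq z‖) ⁻¹' Set.Ioo (‖qq τ‖) 1 := by
      ext z
      simp [Reg, Set.mem_Ioo]
    rw [this]
    exact isOpen_Ioo.preimage hc
  have hterm_diff : ∀ m : ℤ, Differentiable ℂ (fun z : ℂ => Pterm k lam θ τ z m) := by
    intro m
    by_cases h : lam = 0 ∧ θ = 1 ∧ m = 0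
    · simp only [Pterm, if_pos h]
      exact differentiable_const 0
    · simp only [Pterm, if_neg h]
      apply Differentiable.div_const
      apply Differentiable.const_mul
      have : (fun z : ℂ => qpow z (lam + (m : ℝ))) =
          fun z : ℂ => Complex.exp ((2 * Real.pi * Complex.I * (lam + (m : ℝ))) * z) := by
        funext z
        rw [qpow]
        congr 1
        push_cast
        ring
      rw [this]
      exact (differentiable_id.const_mul _).cexp
  have part2 : ∀ K : Set ℂ, K ⊆ {z : ℂ | Reg τ z} → IsCompact K →
      TendstoUniformlyOn (fun (s : Finset ℤ) (z : ℂ) => ∑ m ∈ s, Pterm k lam θ τ z m)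
        (fun z : ℂ => ∑' m : ℤ, Pterm k lam θ τ z m) atTop K := by
    intro K hK hKc
    rcases K.eq_empty_or_nonempty with rfl | hne
    · intro u _
      simp
    · have hc : Continuous fun z : ℂ => ‖qq z‖ :=
        continuous_norm.comp (Complex.continuous_exp.comp
          (continuous_const.mul continuous_id)) |>.congr fun z => by
            rfl
      obtain ⟨z1, hz1K, hmax⟩ := hKc.exists_isMaxOn hne hc.continuousOn
      obtain ⟨z0, hz0K, hmin⟩ := hKc.exists_isMinOn hne hc.continuousOn
      have h0 : ‖qq τ‖ < ‖qq z0‖ := (hK hz0K).1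
      have h1 : ‖qq z1‖ < 1 := (hK hz1K).2
      obtain ⟨u, hu_sum, hb⟩ := majorant k lam hlam θ hθ τ hden (‖qq z0‖) (‖qq z1‖)
        h0 h1 (hmax hz0K)
      exact tendstoUniformlyOn_tsum hu_sum fun m z hz => hb z (hmin hz) (hmax hz) m
  refine ⟨?_, part2, ?_⟩
  · intro z hz
    obtain ⟨u, hu_sum, hb⟩ := majorant k lam hlam θ hθ τ hden (‖qq z‖) (‖qq z‖)
      hz.1 hz.2 le_rfl
    exact Summable.of_nonneg_of_le (fun m => norm_nonneg _)
      (fun m => hb z le_rfl le_rfl m) hu_sum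
  · have hloc : TendstoLocallyUniformlyOn
        (fun (s : Finset ℤ) (z : ℂ) => ∑ m ∈ s, Pterm k lam θ τ z m)
        (fun z : ℂ => ∑' m : ℤ, Pterm k lam θ τ z m) atTop {z : ℂ | Reg τ z} :=
      (tendstoLocallyUniformlyOn_iff_forall_isCompact hregopen).2 part2
    have hdiff : DifferentiableOn ℂ (fun z : ℂ => ∑' m : ℤ, Pterm k lam θ τ z m)
        {z : ℂ | Reg τ z} := by
      apply hloc.differentiableOn ?_ hregopen
      exact Filter.Eventually.of_forall fun s =>
        (Differentiable.fun_sum fun m _ => hterm_diff m).differentiableOn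
    have : (fun z : ℂ => twP k lam θ τ z) = fun z : ℂ =>
        ((-(2 * Real.pi * Complex.I)) ^ k / (Nat.factorial (k - 1) : ℂ)) *
          ∑' m : ℤ, Pterm k lam θ τ z m := by
      funext z; rw [twP]
    rw [this]
    exact hdiff.const_mul _
end

section
/- For every integer k ≥ 1, every τ ∈ ℍ satisfying the nonvanishing assumption, and every z with |q_τ| < |q_z| < 1, the function z ↦ P_1[θ,φ](z,τ) is (k−1) times complex differentiable at z and P_k[θ,φ](z,τ) = ((−1)^{k−1}/(k−1)!) · (∂/∂z)^{k−1} P_1[θ,φ](z,τ); equivalently, (∂/∂z) P_m[θ,φ](z,τ) = −m · P_{m+1}[θ,φ](z,τ) for every integer m ≥ 1. -/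
open Complex Filter

section TwistedWeierstrassAux
open Real

lemma norm_qpow_s1 (w : ℂ) (x : ℝ) :
    ‖qpow w x‖ = Real.exp (-(2 * Real.pi * x * w.im)) := by
  have h : (2 * (Real.pi:ℂ) * Complex.I * x * w) = ((2*Real.pi*x : ℝ) : ℂ) * w * Complex.I := by
    push_cast; ring
  rw [qpow, Complex.norm_exp, h]
  congr 1
  simp [Complex.mul_I_re]


lemma reg_im {τ z : ℂ} (h : Reg τ z) : 0 < z.im ∧ z.im < τ.im := by
  obtain ⟨h1, h2⟩ := h
  have e : ∀ w : ℂ, ‖qq w‖ = Real.exp (-(2 * Real.pi * w.im)) := by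
    intro w
    have := norm_qpow_s1 w 1
    simp only [qpow] at this
    rw [qq]
    rw [show (2 * (Real.pi:ℂ) * Complex.I * w) = (2 * (Real.pi:ℂ) * Complex.I * (1:ℝ) * w) by push_cast; ring]
    rw [this]
    norm_num
  rw [e, e] at h1
  rw [e] at h2
  have h1' := Real.exp_lt_exp.mp h1
  have h2' := Real.exp_lt_one_iff.mp h2
  have hpi := Real.pi_pos
  constructor <;> nlinarith


lemma summable_aux (e : ℕ) {r : ℝ} (hr0 : 0 < r) (hr1 : r < 1) :
    Summable fun j : ℕ => ((j:ℝ)+1)^e * r^j := by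
  have h := summable_pow_mul_geometric_of_norm_lt_one e (r := r)
    (by rwa [Real.norm_eq_abs, abs_of_pos hr0])
  have h2 : Summable fun j : ℕ => (((j+1:ℕ)):ℝ)^e * r^(j+1) := (summable_nat_add_iff 1).2 h
  have h3 := h2.mul_left r⁻¹
  refine h3.congr fun j => ?_
  push_cast
  field_simp
  ring

lemma Dpos_bound {lam : ℝ} {θ τ : ℂ} (hlam : lam ∈ Set.Ico (0:ℝ) 1) (hθ : θ ≠ 0) (hτ : 0 < τ.im)
    (hden : ∀ m : ℤ, ¬(lam = 0 ∧ θ = 1 ∧ m = 0) → 1 - θ⁻¹ * qpow τ (lam + (m : ℝ)) ≠ 0) :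
    ∃ δ : ℝ, 0 < δ ∧ ∀ m : ℤ, 0 ≤ m → ¬(lam = 0 ∧ θ = 1 ∧ m = 0) →
      δ ≤ ‖1 - θ⁻¹ * qpow τ (lam + (m : ℝ))‖ := by
  have hpi := Real.pi_pos
  set A := Real.exp (-(2 * Real.pi * τ.im)) with hA
  have hA1 : A < 1 := Real.exp_lt_one_iff.2 (by nlinarith)
  have hθn : 0 < ‖θ‖ := norm_pos_iff.2 hθ
  obtain ⟨M, hM⟩ := exists_pow_lt_of_lt_one (half_pos hθn) hA1
  -- eventual bound
  have hev : ∀ m : ℤ, (M:ℤ) ≤ m → (1:ℝ)/2 ≤ ‖1 - θ⁻¹ * qpow τ (lam + (m : ℝ))‖ := by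
    intro m hm
    have hn : (M:ℝ) ≤ lam + (m:ℝ) := by
      have : (M:ℝ) ≤ (m:ℝ) := by exact_mod_cast hm
      linarith [hlam.1]
    have h1 : ‖qpow τ (lam + (m:ℝ))‖ ≤ A ^ M := by
      rw [norm_qpow_s1, ← Real.exp_nat_mul]
      apply Real.exp_le_exp.2
      nlinarith [mul_nonneg (mul_pos hpi hτ).le (sub_nonneg.2 hn)]
    have h2 : ‖θ⁻¹ * qpow τ (lam + (m:ℝ))‖ ≤ 1/2 := by
      rw [norm_mul, norm_inv]
      calc ‖θ‖⁻¹ * ‖qpow τ (lam + (m:ℝ))‖ ≤ ‖θ‖⁻¹ * (‖θ‖/2) := by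
            apply mul_le_mul_of_nonneg_left (h1.trans hM.le) (by positivity)
        _ = 1/2 := by rw [← mul_div_assoc, inv_mul_cancel₀ hθn.ne']
    calc (1:ℝ)/2 = ‖(1:ℂ)‖ - 1/2 := by norm_num
      _ ≤ ‖(1:ℂ)‖ - ‖θ⁻¹ * qpow τ (lam + (m:ℝ))‖ := by linarith
      _ ≤ ‖1 - θ⁻¹ * qpow τ (lam + (m:ℝ))‖ := norm_sub_norm_le _ _
  -- finite part
  set g : ℤ → ℝ := fun m => if (lam = 0 ∧ θ = 1 ∧ m = 0) then 1 else ‖1 - θ⁻¹ * qpow τ (lam + (m : ℝ))‖ with hg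
  have hgpos : ∀ m : ℤ, 0 < g m := by
    intro m
    by_cases hc : lam = 0 ∧ θ = 1 ∧ m = 0
    · simp [hg, hc]
    · simp only [hg, if_neg hc]
      exact norm_pos_iff.2 (hden m hc)
  have hne : (Finset.Icc (0:ℤ) M).Nonempty := ⟨0, by simp⟩
  refine ⟨min (1/2) ((Finset.Icc (0:ℤ) M).inf' hne g), ?_, ?_⟩
  · apply lt_min (by norm_num)
    rw [Finset.lt_inf'_iff]
    exact fun i _ => hgpos i
  · intro m hm0 hc
    by_cases hmM : m ≤ (M:ℤ)
    · have h1 : (Finset.Icc (0:ℤ) M).inf' hne g ≤ g m :=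
        Finset.inf'_le g (by simp [hm0, hmM])
      rw [hg] at h1
      simp only [if_neg hc] at h1
      exact le_trans (min_le_right _ _) h1
    · exact le_trans (min_le_left _ _) (hev m (by omega))


lemma Dneg_bound {lam : ℝ} {θ τ : ℂ} (hlam : lam ∈ Set.Ico (0:ℝ) 1) (hθ : θ ≠ 0) (hτ : 0 < τ.im)
    (hden : ∀ m : ℤ, ¬(lam = 0 ∧ θ = 1 ∧ m = 0) → 1 - θ⁻¹ * qpow τ (lam + (m : ℝ)) ≠ 0) :
    ∃ δ : ℝ, 0 < δ ∧ ∀ m : ℤ, m < 0 →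
      δ * (‖θ‖⁻¹ * Real.exp (-(2 * Real.pi * (lam + (m:ℝ)) * τ.im)))
        ≤ ‖1 - θ⁻¹ * qpow τ (lam + (m : ℝ))‖ := by
  have hpi := Real.pi_pos
  have hθn : 0 < ‖θ‖ := norm_pos_iff.2 hθ
  set B := Real.exp (2 * Real.pi * τ.im) with hB
  have hB1 : 1 < B := by
    have h := Real.exp_lt_exp.2 (show (0:ℝ) < 2 * Real.pi * τ.im by nlinarith)
    rwa [Real.exp_zero] at h
  obtain ⟨M, hM⟩ := pow_unbounded_of_one_lt (2 * ‖θ‖) hB1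
  set P : ℤ → ℝ := fun m => ‖θ‖⁻¹ * Real.exp (-(2 * Real.pi * (lam + (m:ℝ)) * τ.im)) with hP
  have hPpos : ∀ m, 0 < P m := fun m => by positivity
  have hev : ∀ m : ℤ, m ≤ -((M:ℤ)+1) → (1/2 : ℝ) * P m ≤ ‖1 - θ⁻¹ * qpow τ (lam + (m : ℝ))‖ := by
    intro m hm
    have h2 : (2:ℝ) ≤ P m := by
      have hmr : (lam + (m:ℝ)) ≤ -(M:ℝ) := by
        have : (m:ℝ) ≤ -((M:ℝ)+1) := by exact_mod_cast hm
        linarith [hlam.2]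
      have h1 : B ^ M ≤ Real.exp (-(2 * Real.pi * (lam + (m:ℝ)) * τ.im)) := by
        rw [hB, ← Real.exp_nat_mul]
        apply Real.exp_le_exp.2
        nlinarith [mul_nonneg (mul_pos hpi hτ).le (show (0:ℝ) ≤ -(M:ℝ) - (lam + (m:ℝ)) by linarith)]
      have : 2 * ‖θ‖ ≤ Real.exp (-(2 * Real.pi * (lam + (m:ℝ)) * τ.im)) := le_trans hM.le h1
      show (2:ℝ) ≤ ‖θ‖⁻¹ * Real.exp (-(2 * Real.pi * (lam + (m:ℝ)) * τ.im))
      rw [inv_mul_eq_div, le_div_iff₀ hθn]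
      linarith
    have hnorm : ‖θ⁻¹ * qpow τ (lam + (m:ℝ))‖ = P m := by
      rw [norm_mul, norm_inv, norm_qpow_s1]
    calc (1/2:ℝ) * P m ≤ P m - 1 := by linarith
      _ = ‖θ⁻¹ * qpow τ (lam + (m:ℝ))‖ - ‖(1:ℂ)‖ := by rw [hnorm]; norm_num
      _ ≤ ‖θ⁻¹ * qpow τ (lam + (m:ℝ)) - 1‖ := norm_sub_norm_le _ _
      _ = ‖1 - θ⁻¹ * qpow τ (lam + (m:ℝ))‖ := by rw [norm_sub_rev]
  set g : ℤ → ℝ := fun m => ‖1 - θ⁻¹ * qpow τ (lam + (m : ℝ))‖ / P m with hg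
  have hgpos : ∀ m : ℤ, m < 0 → 0 < g m := by
    intro m hm
    apply div_pos _ (hPpos m)
    exact norm_pos_iff.2 (hden m (by rintro ⟨_, _, h⟩; omega))
  have hne : (Finset.Icc (-(M:ℤ)-1) (-1)).Nonempty := ⟨-1, by simp⟩
  refine ⟨min (1/2) ((Finset.Icc (-(M:ℤ)-1) (-1)).inf' hne g), ?_, ?_⟩
  · apply lt_min (by norm_num)
    rw [Finset.lt_inf'_iff]
    intro i hi
    simp only [Finset.mem_Icc] at hi
    exact hgpos i (by omega)
  · intro m hm
    by_cases hmM : -(M:ℤ)-1 ≤ m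
    · have h1 : (Finset.Icc (-(M:ℤ)-1) (-1)).inf' hne g ≤ g m :=
        Finset.inf'_le g (by simp only [Finset.mem_Icc]; omega)
      have h2 : min (1/2) ((Finset.Icc (-(M:ℤ)-1) (-1)).inf' hne g) ≤ g m :=
        le_trans (min_le_right _ _) h1
      rw [hg] at h2
      calc min (1/2) ((Finset.Icc (-(M:ℤ)-1) (-1)).inf' hne g) * P m
          ≤ (‖1 - θ⁻¹ * qpow τ (lam + (m : ℝ))‖ / P m) * P m := by
            apply mul_le_mul_of_nonneg_right h2 (hPpos m).le
        _ = ‖1 - θ⁻¹ * qpow τ (lam + (m : ℝ))‖ := div_mul_cancel₀ _ (hPpos m).ne'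
    · calc min (1/2) ((Finset.Icc (-(M:ℤ)-1) (-1)).inf' hne g) * P m
          ≤ (1/2) * P m := mul_le_mul_of_nonneg_right (min_le_left _ _) (hPpos m).le
        _ ≤ _ := hev m (by omega)

private lemma alg1 (a b c d e : ℝ) (hc : c ≠ 0) (hd : d ≠ 0) (he : e ≠ 0) :
    (a * b) / (c * (d⁻¹ * e)) = c⁻¹ * d * (a * (b / e)) := by
  field_simp

private lemma alg2 (a p q r : ℝ) (hr : r ≠ 0) :
    a * (p * (q / r)) = (a / r) * p * q := by
  field_simp

set_option maxHeartbeats 1000000 in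
lemma Pterm_bound {lam : ℝ} {θ τ : ℂ} (hlam : lam ∈ Set.Ico (0:ℝ) 1) (hθ : θ ≠ 0) (hτ : 0 < τ.im)
    (hden : ∀ m : ℤ, ¬(lam = 0 ∧ θ = 1 ∧ m = 0) → 1 - θ⁻¹ * qpow τ (lam + (m : ℝ)) ≠ 0)
    {z : ℂ} (hz1 : 0 < z.im) (hz2 : z.im < τ.im) (e : ℕ) :
    ∃ u : ℤ → ℝ, Summable u ∧ ∀ w : ℂ, z.im/2 < w.im → w.im < (z.im + τ.im)/2 →
      ∀ m : ℤ, ‖Pterm (e+1) lam θ τ w m‖ ≤ u m := by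
  have hpi := Real.pi_pos
  have hθn : 0 < ‖θ‖ := norm_pos_iff.2 hθ
  set c1 : ℝ := z.im/2 with hc1def
  set c2 : ℝ := (z.im + τ.im)/2 with hc2def
  have hc1 : 0 < c1 := by simp [hc1def]; linarith
  have hc2 : c2 < τ.im := by simp [hc2def]; linarith
  set r1 : ℝ := Real.exp (-(2 * Real.pi * c1)) with hr1def
  set r2 : ℝ := Real.exp (-(2 * Real.pi * (τ.im - c2))) with hr2def
  have hr1p : 0 < r1 := Real.exp_pos _
  have hr2p : 0 < r2 := Real.exp_pos _
  have hr1l : r1 < 1 := Real.exp_lt_one_iff.2 (by nlinarith)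
  have hr2l : r2 < 1 := Real.exp_lt_one_iff.2 (by nlinarith)
  obtain ⟨δ1, hδ1p, hδ1⟩ := Dpos_bound hlam hθ hτ hden
  obtain ⟨δ2, hδ2p, hδ2⟩ := Dneg_bound hlam hθ hτ hden
  set C2 : ℝ := δ2⁻¹ * ‖θ‖ / r2 with hC2def
  refine ⟨fun m => if 0 ≤ m then δ1⁻¹ * (((m.natAbs:ℝ))+1)^e * r1 ^ m.natAbs
    else C2 * (((m.natAbs:ℝ))+1)^e * r2 ^ m.natAbs, ?_, ?_⟩
  · apply Summable.of_nat_of_neg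
    · have h := (summable_aux e hr1p hr1l).mul_left δ1⁻¹
      refine h.congr fun j => ?_
      simp only [Int.natAbs_natCast, if_pos (Int.ofNat_nonneg j)]
      push_cast
      ring
    · apply (summable_nat_add_iff 1).1
      have h0 := (summable_nat_add_iff 1).2 (summable_aux e hr2p hr2l)
      have h := h0.mul_left C2
      refine h.congr fun j => ?_
      have h1 : ¬ ((0:ℤ) ≤ -(((j:ℤ)) + 1)) := by omega
      have h2 : (-(((j:ℤ)) + 1)).natAbs = j + 1 := by omega
      simp only [Nat.cast_add, Nat.cast_one, neg_add_rev]
      rw [show (-1 + -(j:ℤ)) = -((j:ℤ)+1) by ring, if_neg h1, h2]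
      push_cast
      ring
  · intro w hw1 hw2 m
    by_cases hcond : lam = 0 ∧ θ = 1 ∧ m = 0
    · rw [Pterm, if_pos hcond]
      rw [hcond.2.2]
      simp only [if_pos (le_refl (0:ℤ))]
      simp
      positivity
    · rw [Pterm, if_neg hcond, Nat.add_sub_cancel]
      set n : ℝ := lam + (m:ℝ) with hndef
      rw [norm_div, norm_mul, norm_pow, Complex.norm_real, Real.norm_eq_abs, norm_qpow_s1]
      by_cases hm0 : 0 ≤ m
      · -- positive side
        simp only [if_pos hm0]
        have hmr : (0:ℝ) ≤ (m:ℝ) := by exact_mod_cast hm0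
        have hmx : ((m.natAbs : ℝ)) = (m : ℝ) := by
          rw [Nat.cast_natAbs]; push_cast; exact _root_.abs_of_nonneg hmr
        have hn0 : 0 ≤ n := by rw [hndef]; linarith [hlam.1]
        have hD := hδ1 m hm0 hcond
        have hnum1 : |n|^e ≤ ((m.natAbs:ℝ)+1)^e := by
          apply pow_le_pow_left₀ (abs_nonneg n)
          rw [_root_.abs_of_nonneg hn0, hmx, hndef]
          linarith [hlam.2]
        have hnum2 : Real.exp (-(2 * Real.pi * n * w.im)) ≤ r1 ^ m.natAbs := by
          rw [hr1def, ← Real.exp_nat_mul]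
          apply Real.exp_le_exp.2
          rw [hmx]
          have hcw : c1 < w.im := hw1
          have key : (m:ℝ) * c1 ≤ n * w.im := by
            have e1 : (m:ℝ) * c1 ≤ (m:ℝ) * w.im := mul_le_mul_of_nonneg_left hcw.le hmr
            have e2 : (m:ℝ) * w.im ≤ n * w.im := by
              apply mul_le_mul_of_nonneg_right _ (le_trans hc1.le hcw.le)
              rw [hndef]; linarith [hlam.1]
            linarith
          nlinarith [mul_nonneg hpi.le (sub_nonneg.2 key)]
        calc |n|^e * Real.exp (-(2 * Real.pi * n * w.im)) / ‖1 - θ⁻¹ * qpow τ n‖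
            ≤ (((m.natAbs:ℝ)+1)^e * r1 ^ m.natAbs) / δ1 := by
              apply div_le_div₀ (by positivity) _ hδ1p hD
              exact mul_le_mul hnum1 hnum2 (Real.exp_nonneg _) (by positivity)
          _ = δ1⁻¹ * (((m.natAbs:ℝ))+1)^e * r1 ^ m.natAbs := by ring
      · -- negative side
        simp only [if_neg hm0]
        push_neg at hm0
        have hmr' : (m:ℝ) < 0 := by exact_mod_cast hm0
        have hmx : ((m.natAbs : ℝ)) = -(m : ℝ) := by
          rw [Nat.cast_natAbs]; push_cast; exact _root_.abs_of_neg hmr'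
        have hnneg : n < 0 := by
          rw [hndef]
          have h1 : m ≤ -1 := by omega
          have : (m:ℝ) ≤ -1 := by exact_mod_cast h1
          linarith [hlam.2]
        have hD := hδ2 m hm0
        have hnum1 : |n|^e ≤ ((m.natAbs:ℝ)+1)^e := by
          apply pow_le_pow_left₀ (abs_nonneg n)
          rw [abs_of_neg hnneg, hmx, hndef]
          linarith [hlam.1]
        have hE : Real.exp (-(2 * Real.pi * n * w.im)) ≤ Real.exp (-(2 * Real.pi * n * c2)) := by
          apply Real.exp_le_exp.2
          nlinarith [mul_nonneg (mul_nonneg hpi.le (neg_nonneg.2 hnneg.le)) (sub_nonneg.2 hw2.le)]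
        have hDlowpos : 0 < δ2 * (‖θ‖⁻¹ * Real.exp (-(2 * Real.pi * n * τ.im))) := by positivity
        have step1 : |n|^e * Real.exp (-(2 * Real.pi * n * w.im)) / ‖1 - θ⁻¹ * qpow τ n‖
            ≤ (((m.natAbs:ℝ)+1)^e * Real.exp (-(2 * Real.pi * n * c2)))
              / (δ2 * (‖θ‖⁻¹ * Real.exp (-(2 * Real.pi * n * τ.im)))) := by
          apply div_le_div₀ (by positivity) _ hDlowpos hD
          exact mul_le_mul hnum1 hE (Real.exp_nonneg _) (by positivity)
        have step2 : (((m.natAbs:ℝ)+1)^e * Real.exp (-(2 * Real.pi * n * c2)))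
              / (δ2 * (‖θ‖⁻¹ * Real.exp (-(2 * Real.pi * n * τ.im))))
            = (δ2⁻¹ * ‖θ‖) * (((m.natAbs:ℝ)+1)^e
                * (Real.exp (-(2 * Real.pi * n * c2)) / Real.exp (-(2 * Real.pi * n * τ.im)))) :=
          alg1 _ _ _ _ _ hδ2p.ne' hθn.ne' (Real.exp_pos _).ne'
        have hG : Real.exp (-(2 * Real.pi * n * c2)) / Real.exp (-(2 * Real.pi * n * τ.im))
            = Real.exp (2 * Real.pi * n * (τ.im - c2)) := by
          rw [← Real.exp_sub]
          congr 1
          ring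
        have hGle : Real.exp (2 * Real.pi * n * (τ.im - c2)) ≤ r2 ^ m.natAbs / r2 := by
          rw [le_div_iff₀ hr2p, hr2def, ← Real.exp_add, ← Real.exp_nat_mul]
          apply Real.exp_le_exp.2
          rw [hmx]
          have hn1 : n - 1 ≤ (m:ℝ) := by rw [hndef]; linarith [hlam.2]
          nlinarith [mul_nonneg (mul_nonneg hpi.le (sub_nonneg.2 hc2.le)) (sub_nonneg.2 hn1)]
        calc |n|^e * Real.exp (-(2 * Real.pi * n * w.im)) / ‖1 - θ⁻¹ * qpow τ n‖
            ≤ (δ2⁻¹ * ‖θ‖) * (((m.natAbs:ℝ)+1)^e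
                * (Real.exp (-(2 * Real.pi * n * c2)) / Real.exp (-(2 * Real.pi * n * τ.im)))) := by
              rw [← step2]; exact step1
          _ = (δ2⁻¹ * ‖θ‖) * (((m.natAbs:ℝ)+1)^e * Real.exp (2 * Real.pi * n * (τ.im - c2))) := by
              rw [hG]
          _ ≤ (δ2⁻¹ * ‖θ‖) * (((m.natAbs:ℝ)+1)^e * (r2 ^ m.natAbs / r2)) := by
              apply mul_le_mul_of_nonneg_left _ (by positivity)
              exact mul_le_mul_of_nonneg_left hGle (by positivity)
          _ = C2 * (((m.natAbs:ℝ))+1)^e * r2 ^ m.natAbs := by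
              rw [hC2def]; exact alg2 _ _ _ _ hr2p.ne'

lemma hasDerivAt_Pterm (K : ℕ) (hK : 1 ≤ K) (lam : ℝ) (θ τ : ℂ) (m : ℤ) (x : ℂ) :
    HasDerivAt (fun w => Pterm K lam θ τ w m)
      (2 * Real.pi * Complex.I * Pterm (K+1) lam θ τ x m) x := by
  obtain ⟨j, rfl⟩ : ∃ j, K = j + 1 := ⟨K-1, (Nat.sub_add_cancel hK).symm⟩
  by_cases hc : lam = 0 ∧ θ = 1 ∧ m = 0
  · simp only [Pterm, if_pos hc, mul_zero]
    exact hasDerivAt_const x 0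
  · simp only [Pterm, if_neg hc, qpow]
    have h0 : HasDerivAt (fun w : ℂ => 2*(Real.pi:ℂ)*Complex.I*((lam + (m:ℝ) : ℝ):ℂ)*w)
        (2*(Real.pi:ℂ)*Complex.I*((lam + (m:ℝ) : ℝ):ℂ)) x := by
      simpa using (hasDerivAt_id x).const_mul (2*(Real.pi:ℂ)*Complex.I*((lam + (m:ℝ) : ℝ):ℂ))
    have h2 := ((h0.cexp.const_mul (((lam + (m:ℝ) : ℝ):ℂ)^j)).div_const
      (1 - θ⁻¹ * Complex.exp (2*(Real.pi:ℂ)*Complex.I*((lam + (m:ℝ) : ℝ):ℂ)*τ)))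
    refine h2.congr_deriv ?_
    simp only [Nat.add_sub_cancel]
    rw [pow_succ]
    ring


lemma key {lam : ℝ} {θ τ : ℂ} (hlam : lam ∈ Set.Ico (0:ℝ) 1) (hθ : θ ≠ 0) (hτ : 0 < τ.im)
    (hden : ∀ m : ℤ, ¬(lam = 0 ∧ θ = 1 ∧ m = 0) → 1 - θ⁻¹ * qpow τ (lam + (m : ℝ)) ≠ 0)
    {z : ℂ} (hz1 : 0 < z.im) (hz2 : z.im < τ.im) (K : ℕ) (hK : 1 ≤ K)
    {x : ℂ} (hx1 : z.im/2 < x.im) (hx2 : x.im < (z.im + τ.im)/2) :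
    HasDerivAt (fun w => twP K lam θ τ w) (-(K:ℂ) * twP (K+1) lam θ τ x) x := by
  obtain ⟨j, rfl⟩ : ∃ j, K = j + 1 := ⟨K-1, (Nat.sub_add_cancel hK).symm⟩
  set S : Set ℂ := Complex.im ⁻¹' (Set.Ioo (z.im/2) ((z.im + τ.im)/2)) with hS
  have hopen : IsOpen S := isOpen_Ioo.preimage Complex.continuous_im
  have hconv : Convex ℝ S :=
    (convex_Ioo _ _).linear_preimage Complex.imLm
  obtain ⟨u, hu, hub⟩ := Pterm_bound hlam hθ hτ hden hz1 hz2 (j+1)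
  obtain ⟨u0, hu0, hub0⟩ := Pterm_bound hlam hθ hτ hden hz1 hz2 j
  have hzS : z ∈ S := by
    simp only [hS, Set.mem_preimage, Set.mem_Ioo]
    constructor <;> linarith
  have hxS : x ∈ S := ⟨hx1, hx2⟩
  have hnorm2pi : ‖(2*(Real.pi:ℂ)*Complex.I)‖ = 2 * Real.pi := by
    simp [map_mul,
      abs_of_pos Real.pi_pos]
  have hsum : HasDerivAt (fun w => ∑' m : ℤ, Pterm (j+1) lam θ τ w m)
      (∑' m : ℤ, 2 * Real.pi * Complex.I * Pterm (j+1+1) lam θ τ x m) x := by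
    apply hasDerivAt_tsum_of_isPreconnected (u := fun m => 2 * Real.pi * u m)
      (hu.mul_left _) hopen hconv.isPreconnected
      (fun m y _ => hasDerivAt_Pterm (j+1) hK lam θ τ m y) _ hzS _ hxS
    · intro m y hy
      rw [norm_mul, hnorm2pi]
      exact mul_le_mul_of_nonneg_left (hub y hy.1 hy.2 m) (by positivity)
    · exact Summable.of_norm_bounded hu0 fun m => hub0 z (by linarith) (by linarith) m
  have hmul := hsum.const_mul ((-(2 * (Real.pi:ℂ) * Complex.I)) ^ (j+1) / (Nat.factorial (j+1 - 1) : ℂ))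
  have heq : ((-(2 * (Real.pi:ℂ) * Complex.I)) ^ (j+1) / (Nat.factorial (j+1 - 1) : ℂ)) *
      (∑' m : ℤ, 2 * Real.pi * Complex.I * Pterm (j+1+1) lam θ τ x m)
      = -((j+1:ℕ):ℂ) * twP (j+1+1) lam θ τ x := by
    rw [tsum_mul_left, twP]
    simp only [Nat.add_sub_cancel]
    rw [Nat.factorial_succ]
    have h1 : ((Nat.factorial j) : ℂ) ≠ 0 := Nat.cast_ne_zero.2 (Nat.factorial_ne_zero _)
    have h2 : ((j:ℂ) + 1) ≠ 0 := by
      exact_mod_cast (Nat.cast_ne_zero (R := ℂ)).2 (Nat.succ_ne_zero j)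
    push_cast
    rw [pow_succ, pow_succ]
    field_simp
    ring
  rw [heq] at hmul
  exact hmul

end TwistedWeierstrassAux

/-- For every integer `k ≥ 1` and every `z` in the region
`|q_τ| < |q_z| < 1`, the function `z ↦ P_1[θ,φ](z,τ)` is `(k−1)` times complex
differentiable at `z` and
`P_k[θ,φ](z,τ) = ((−1)^{k−1}/(k−1)!) (∂/∂z)^{k−1} P_1[θ,φ](z,τ)`;
equivalently, `(∂/∂z) P_m[θ,φ](z,τ) = −m · P_{m+1}[θ,φ](z,τ)` for every `m ≥ 1`. -/
theorem twistedWeierstrass_deriv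
    (k : ℕ) (hk : 1 ≤ k) (lam : ℝ) (hlam : lam ∈ Set.Ico (0:ℝ) 1)
    (θ : ℂ) (hθ : θ ≠ 0) (τ : ℂ) (hτ : 0 < τ.im)
    (hden : ∀ m : ℤ, ¬(lam = 0 ∧ θ = 1 ∧ m = 0) →
      1 - θ⁻¹ * qpow τ (lam + (m : ℝ)) ≠ 0)
    (z : ℂ) (hz : Reg τ z) :
    ContDiffAt ℂ ((k - 1 : ℕ) : ℕ∞) (fun w : ℂ => twP 1 lam θ τ w) z ∧
    twP k lam θ τ z =
      ((-1 : ℂ) ^ (k - 1) / (Nat.factorial (k - 1) : ℂ)) *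
        iteratedDeriv (k - 1) (fun w : ℂ => twP 1 lam θ τ w) z ∧
    (∀ m : ℕ, 1 ≤ m →
      deriv (fun w : ℂ => twP m lam θ τ w) z = -(m : ℂ) * twP (m + 1) lam θ τ z) := by
  obtain ⟨hz1, hz2⟩ := reg_im hz
  set S : Set ℂ := Complex.im ⁻¹' (Set.Ioo (z.im/2) ((z.im + τ.im)/2)) with hS
  have hopen : IsOpen S := isOpen_Ioo.preimage Complex.continuous_im
  have hmemS : ∀ x : ℂ, x ∈ S ↔ (z.im/2 < x.im ∧ x.im < (z.im + τ.im)/2) := fun x => Iff.rfl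
  have hzS : z ∈ S := by
    rw [hmemS]
    constructor <;> linarith
  have hkey : ∀ K : ℕ, 1 ≤ K → ∀ x ∈ S, HasDerivAt (fun w => twP K lam θ τ w)
      (-(K:ℂ) * twP (K+1) lam θ τ x) x := by
    intro K hK x hx
    exact key hlam hθ hτ hden hz1 hz2 K hK ((hmemS x).1 hx).1 ((hmemS x).1 hx).2
  -- part 1
  have hdiff : DifferentiableOn ℂ (fun w : ℂ => twP 1 lam θ τ w) S := fun x hx =>
    ((hkey 1 le_rfl x hx).differentiableAt).differentiableWithinAt
  have hcd : ContDiffAt ℂ ((k - 1 : ℕ) : ℕ∞) (fun w : ℂ => twP 1 lam θ τ w) z :=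
    (((hdiff.analyticOnNhd hopen).contDiffOn hopen.uniqueDiffOn).contDiffAt
      (hopen.mem_nhds hzS))
  refine ⟨hcd, ?_, ?_⟩
  · -- iterated derivative formula
    have hiter : ∀ j : ℕ, ∀ x ∈ S, iteratedDeriv j (fun w : ℂ => twP 1 lam θ τ w) x
        = ((-1 : ℂ))^j * (Nat.factorial j : ℂ) * twP (j+1) lam θ τ x := by
      intro j
      induction j with
      | zero => intro x hx; simp [iteratedDeriv_zero]
      | succ j ih =>
        intro x hx
        rw [iteratedDeriv_succ]
        have hev : iteratedDeriv j (fun w : ℂ => twP 1 lam θ τ w)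
            =ᶠ[nhds x] fun y => ((-1 : ℂ))^j * (Nat.factorial j : ℂ) * twP (j+1) lam θ τ y :=
          Filter.eventuallyEq_of_mem (hopen.mem_nhds hx) ih
        rw [hev.deriv_eq]
        have hd := (hkey (j+1) (Nat.le_add_left 1 j) x hx).const_mul
          (((-1 : ℂ))^j * (Nat.factorial j : ℂ))
        rw [hd.deriv]
        rw [Nat.factorial_succ]
        push_cast
        ring
    have h := hiter (k-1) z hzS
    rw [h]
    have hkk : k - 1 + 1 = k := Nat.sub_add_cancel hk
    rw [hkk]
    have h1 : ((Nat.factorial (k-1)) : ℂ) ≠ 0 := Nat.cast_ne_zero.2 (Nat.factorial_ne_zero _)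
    have h2 : ((-1:ℂ))^(k-1) * ((-1:ℂ))^(k-1) = 1 := by
      rw [← pow_add]
      exact Even.neg_one_pow ⟨k-1, by ring⟩
    field_simp
    rw [sq, h2]
    ring
  · intro m hm
    exact (hkey m hm z hzS).deriv
end
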